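/- Let μ be a σ-finite measure on a measurable space X and let P₀ and P₁ be probability measures on X with densities p₀ and p₁ with respect to μ. Then ∫ min{p₀, p₁} dμ equals the infimum, over all finite measurable partitions {A₁,…,A_k} of X, of ∑_{i=1}^k min{P₀(A_i), P₁(A_i)}. -/

import Mathlib

open MeasureTheory

/-- For probability measures `P₀, P₁` with densities `p₀, p₁` w.r.t. a σ-finite measure `μ`,
`∫ min{p₀,p₁} dμ` equals the infimum over finite measurable partitions of
`∑ᵢ min{P₀(Aᵢ), P₁(Aᵢ)}`. -/
theorem stmt10 {X : Type*} [MeasurableSpace X] (μ : Measure X) [SigmaFinite μ]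
    (p₀ p₁ : X → ℝ) (h₀m : Measurable p₀) (h₁m : Measurable p₁)
    (h₀0 : ∀ x, 0 ≤ p₀ x) (h₁0 : ∀ x, 0 ≤ p₁ x)
    (P₀ P₁ : Measure X)
    (hP₀ : P₀ = μ.withDensity fun x => ENNReal.ofReal (p₀ x))
    (hP₁ : P₁ = μ.withDensity fun x => ENNReal.ofReal (p₁ x))
    [IsProbabilityMeasure P₀] [IsProbabilityMeasure P₁] :
    ∫ x, min (p₀ x) (p₁ x) ∂μ
      = sInf {r : ℝ | ∃ (k : ℕ) (A : Fin k → Set X),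
          (∀ i, MeasurableSet (A i)) ∧ Pairwise (Function.onFun Disjoint A) ∧
          (⋃ i, A i) = Set.univ ∧
          r = ∑ i, min (P₀ (A i)).toReal (P₁ (A i)).toReal} := by
  -- measures of sets as integrals
  have key₀ : ∀ A : Set X, MeasurableSet A → (P₀ A).toReal = ∫ x in A, p₀ x ∂μ := by
    intro A hA
    rw [hP₀, withDensity_apply _ hA,
      integral_eq_lintegral_of_nonneg_ae (Filter.Eventually.of_forall fun x => h₀0 x)
        h₀m.aestronglyMeasurable]
  have key₁ : ∀ A : Set X, MeasurableSet A → (P₁ A).toReal = ∫ x in A, p₁ x ∂μ := by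
    intro A hA
    rw [hP₁, withDensity_apply _ hA,
      integral_eq_lintegral_of_nonneg_ae (Filter.Eventually.of_forall fun x => h₁0 x)
        h₁m.aestronglyMeasurable]
  -- integrability
  have hint : ∀ (p : X → ℝ), Measurable p → (∀ x, 0 ≤ p x) →
      (μ.withDensity fun x => ENNReal.ofReal (p x)) Set.univ ≠ ⊤ → Integrable p μ := by
    intro p hm h0 hfin
    refine ⟨hm.aestronglyMeasurable, ?_⟩
    rw [HasFiniteIntegral]
    have : ∫⁻ x, ‖p x‖ₑ ∂μ = ∫⁻ x, ENNReal.ofReal (p x) ∂μ := by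
      congr 1; ext x; exact Real.enorm_eq_ofReal (h0 x)
    rw [this]
    rw [withDensity_apply _ MeasurableSet.univ, Measure.restrict_univ] at hfin
    exact lt_top_iff_ne_top.2 hfin
  have hp0int : Integrable p₀ μ := hint p₀ h₀m h₀0 (hP₀ ▸ measure_ne_top P₀ _)
  have hp1int : Integrable p₁ μ := hint p₁ h₁m h₁0 (hP₁ ▸ measure_ne_top P₁ _)
  have hminm : Measurable fun x => min (p₀ x) (p₁ x) := h₀m.min h₁m
  have hminint : Integrable (fun x => min (p₀ x) (p₁ x)) μ := by
    refine hp0int.mono hminm.aestronglyMeasurable (Filter.Eventually.of_forall fun x => ?_)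
    rw [Real.norm_eq_abs, Real.norm_eq_abs, abs_of_nonneg (le_min (h₀0 x) (h₁0 x)),
      abs_of_nonneg (h₀0 x)]
    exact min_le_left _ _
  -- piecewise inequality
  have hle : ∀ A : Set X, MeasurableSet A →
      ∫ x in A, min (p₀ x) (p₁ x) ∂μ ≤ min (P₀ A).toReal (P₁ A).toReal := by
    intro A hA
    refine le_min ?_ ?_
    · rw [key₀ A hA]
      exact setIntegral_mono_on hminint.integrableOn hp0int.integrableOn hA
        (fun x _ => min_le_left _ _)
    · rw [key₁ A hA]
      exact setIntegral_mono_on hminint.integrableOn hp1int.integrableOn hA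
        (fun x _ => min_le_right _ _)
  refine le_antisymm ?_ ?_
  · -- LHS is a lower bound
    refine le_csInf ⟨min (P₀ Set.univ).toReal (P₁ Set.univ).toReal,
      1, fun _ => Set.univ, fun _ => MeasurableSet.univ, Subsingleton.pairwise,
      by simp [Set.iUnion_const], by simp⟩ ?_
    rintro r ⟨k, A, hAm, hAd, hAu, rfl⟩
    have h1 : ∫ x, min (p₀ x) (p₁ x) ∂μ = ∑ i, ∫ x in A i, min (p₀ x) (p₁ x) ∂μ := by
      rw [← setIntegral_univ, ← hAu,
        integral_iUnion_fintype hAm hAd fun i => hminint.integrableOn]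
    rw [h1]
    exact Finset.sum_le_sum fun i _ => hle (A i) (hAm i)
  · -- witness partition
    set S : Set X := {x | p₀ x ≤ p₁ x} with hS
    have hSm : MeasurableSet S := measurableSet_le h₀m h₁m
    set A : Fin 2 → Set X := ![S, Sᶜ] with hA
    have hAm : ∀ i, MeasurableSet (A i) := by
      intro i; fin_cases i
      · exact hSm
      · exact hSm.compl
    have hAd : Pairwise (Function.onFun Disjoint A) := by
      intro i j hij
      fin_cases i <;> fin_cases j <;> simp_all [Function.onFun, disjoint_compl_right,
        disjoint_compl_left, A]
    have hAu : (⋃ i, A i) = Set.univ := by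
      rw [hA]
      simp [Fin.exists_fin_two, Set.eq_univ_iff_forall, Set.mem_iUnion]
      intro x; exact le_or_gt (p₀ x) (p₁ x) |>.imp id (fun h => not_le.2 h)
    refine csInf_le ⟨∫ x, min (p₀ x) (p₁ x) ∂μ, ?_⟩ ⟨2, A, hAm, hAd, hAu, ?_⟩
    · rintro r ⟨k, B, hBm, hBd, hBu, rfl⟩
      have h1 : ∫ x, min (p₀ x) (p₁ x) ∂μ = ∑ i, ∫ x in B i, min (p₀ x) (p₁ x) ∂μ := by
        rw [← setIntegral_univ, ← hBu,
          integral_iUnion_fintype hBm hBd fun i => hminint.integrableOn]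
      rw [h1]
      exact Finset.sum_le_sum fun i _ => hle (B i) (hBm i)
    · have e0 : min (P₀ S).toReal (P₁ S).toReal = ∫ x in S, min (p₀ x) (p₁ x) ∂μ := by
        have h01 : (P₀ S).toReal ≤ (P₁ S).toReal := by
          rw [key₀ S hSm, key₁ S hSm]
          exact setIntegral_mono_on hp0int.integrableOn hp1int.integrableOn hSm
            (fun x hx => hx)
        rw [min_eq_left h01, key₀ S hSm]
        refine setIntegral_congr_fun hSm fun x hx => ?_
        exact (min_eq_left hx).symm
      have e1 : min (P₀ Sᶜ).toReal (P₁ Sᶜ).toReal = ∫ x in Sᶜ, min (p₀ x) (p₁ x) ∂μ := by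
        have h01 : (P₁ Sᶜ).toReal ≤ (P₀ Sᶜ).toReal := by
          rw [key₀ _ hSm.compl, key₁ _ hSm.compl]
          exact setIntegral_mono_on hp1int.integrableOn hp0int.integrableOn hSm.compl
            (fun x hx => by
              simp only [Set.mem_compl_iff, Set.mem_setOf_eq, S] at hx
              exact le_of_lt (not_le.1 hx))
        rw [min_eq_right h01, key₁ _ hSm.compl]
        refine setIntegral_congr_fun hSm.compl fun x hx => ?_
        simp only [Set.mem_compl_iff, Set.mem_setOf_eq, S] at hx
        exact (min_eq_right (le_of_lt (not_le.1 hx))).symm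
      have hsum : ∫ x, min (p₀ x) (p₁ x) ∂μ = ∑ i, ∫ x in A i, min (p₀ x) (p₁ x) ∂μ := by
        rw [← setIntegral_univ, ← hAu,
          integral_iUnion_fintype hAm hAd fun i => hminint.integrableOn]
      rw [hsum, Fin.sum_univ_two, Fin.sum_univ_two]
      simp only [hA, Matrix.cons_val_zero, Matrix.cons_val_one, Matrix.head_cons]
      rw [e0, e1]
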